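/- arXiv:1207.0198 — 3 statements merged into one kernel-verified Lean document; each statement's English description precedes it below -/
import Mathlib

section
/- For every prime p and every integer n ≥ 1, the polynomial P_p^{(n)}(X,1) divides R_p^{(n)}(X,1) in the polynomial ring ℤ[X]. -/
open MvPolynomial Finset

/-- The polynomial `P_p^{(n)}(X, Y) ∈ ℤ[X, Y]`, where `X 0` plays the role of `X` and
`X 1` plays the role of `Y`.  For `n ≥ 1` it is
`(1 − p^n·X·Y)·∏_{i=1}^{⌊n/2⌋}(1 − p^{2n−2i+1}·X²·Y)`, and `P_p^{(0)} := 1`. -/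
noncomputable def Ppoly (p n : ℕ) : MvPolynomial (Fin 2) ℤ :=
  if n = 0 then 1
  else
    (1 - (p : MvPolynomial (Fin 2) ℤ) ^ n * X 0 * X 1) *
      ∏ i ∈ Finset.Icc 1 (n / 2),
        (1 - (p : MvPolynomial (Fin 2) ℤ) ^ (2 * n - 2 * i + 1) * X 0 ^ 2 * X 1)

/-- The polynomial `R_p^{(n)}(X, Y) := ∏_{j=1}^{n}(1 − p^{j(2n−j+1)/2}·X^j·Y) ∈ ℤ[X, Y]`,
where `X 0` plays the role of `X` and `X 1` plays the role of `Y`; `R_p^{(0)} = 1`. -/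
noncomputable def Rpoly (p n : ℕ) : MvPolynomial (Fin 2) ℤ :=
  ∏ j ∈ Finset.Icc 1 n,
    (1 - (p : MvPolynomial (Fin 2) ℤ) ^ (j * (2 * n - j + 1) / 2) * X 0 ^ j * X 1)

/-- Substitution of `Y = 1`, turning a polynomial in `ℤ[X, Y]` into a one-variable
polynomial in `ℤ[X]`. -/
noncomputable def evalYone : MvPolynomial (Fin 2) ℤ →ₐ[ℤ] Polynomial ℤ :=
  MvPolynomial.aeval fun i => if i = 0 then Polynomial.X else 1

theorem stmt_1 (p : ℕ) (hp : p.Prime) (n : ℕ) (hn : 1 ≤ n) :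
    evalYone (Ppoly p n) ∣ evalYone (Rpoly p n) := by
  set q : ℕ → Polynomial ℤ :=
    fun j => 1 - (p : Polynomial ℤ) ^ (j * (2 * n - j + 1) / 2) * Polynomial.X ^ j with hq
  have hR : evalYone (Rpoly p n) = ∏ j ∈ Finset.Icc 1 n, q j := by
    simp [Rpoly, evalYone, hq]
  have hP : evalYone (Ppoly p n) =
      (1 - (p : Polynomial ℤ) ^ n * Polynomial.X) *
        ∏ i ∈ Finset.Icc 1 (n / 2),
          (1 - (p : Polynomial ℤ) ^ (2 * n - 2 * i + 1) * Polynomial.X ^ 2) := by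
    simp [Ppoly, evalYone, Nat.one_le_iff_ne_zero.mp hn]
  rw [hP, hR]
  have key : (1 - (p : Polynomial ℤ) ^ n * Polynomial.X) *
        (∏ i ∈ Finset.Icc 1 (n / 2),
          (1 - (p : Polynomial ℤ) ^ (2 * n - 2 * i + 1) * Polynomial.X ^ 2))
      ∣ q 1 * ∏ i ∈ Finset.Icc 1 (n / 2), q (2 * i) := by
    apply mul_dvd_mul
    · have h1 : q 1 = 1 - (p : Polynomial ℤ) ^ n * Polynomial.X := by
        have h2 : 1 * (2 * n - 1 + 1) / 2 = n := by omega
        simp only [hq, h2, pow_one]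
      rw [h1]
    · apply Finset.prod_dvd_prod_of_dvd
      intro i hi
      have hi2 : 1 ≤ i ∧ i ≤ n / 2 := Finset.mem_Icc.mp hi
      have hexp : 2 * i * (2 * n - 2 * i + 1) / 2 = (2 * n - 2 * i + 1) * i := by
        have h2 : 2 * i * (2 * n - 2 * i + 1) = 2 * ((2 * n - 2 * i + 1) * i) := by ring
        rw [h2, Nat.mul_div_cancel_left _ two_pos]
      have hqi : q (2 * i) = 1 - ((p : Polynomial ℤ) ^ (2 * n - 2 * i + 1) * Polynomial.X ^ 2) ^ i := by
        simp only [hq, hexp, mul_pow, ← pow_mul]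
      rw [hqi]
      have hd := sub_dvd_pow_sub_pow 1 ((p : Polynomial ℤ) ^ (2 * n - 2 * i + 1) * Polynomial.X ^ 2) i
      rwa [one_pow] at hd
  refine key.trans ?_
  have himg : q 1 * ∏ i ∈ Finset.Icc 1 (n / 2), q (2 * i)
      = ∏ j ∈ insert 1 ((Finset.Icc 1 (n / 2)).image (2 * ·)), q j := by
    rw [Finset.prod_insert, Finset.prod_image]
    · intro a _ b _ h; have h' : 2 * a = 2 * b := h; omega
    · simp only [Finset.mem_image, Finset.mem_Icc]
      rintro ⟨i, hi, h⟩; omega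
  rw [himg]
  apply Finset.prod_dvd_prod_of_subset
  intro j hj
  simp only [Finset.mem_insert, Finset.mem_image, Finset.mem_Icc] at hj ⊢
  rcases hj with h | ⟨i, hi, rfl⟩ <;> omega
end

section
/- Let p be a prime and c an integer. For all integers a ≥ 0 and b ≥ 0, one has in ℤ[X] the identity K_{a+2,b+2}(X) − (p²·X + p³·X²)·K_{a+1,b+1}(X) + p⁵·X³·K_{a,b}(X) = 1 − c·p·X. -/
open Polynomial Finset

/-- Kaufhold's explicit polynomial
`K_{a,b}(X) := Σ_{i=0}^{a} (p²X)^i (Σ_{j=0}^{b−i} (p³X²)^j − c·p·X·Σ_{j=0}^{b−i−1} (p³X²)^j)`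
in `ℤ[X]`, where any sum `Σ_{j=0}^{t}` with `t < 0` is interpreted as `0`.  (Note that
`b + 1 - i = 0` in `ℕ` exactly when `i > b`, and `b - i = 0` in `ℕ` when `i ≥ b`, so the
truncated natural subtractions below implement this convention.) -/
noncomputable def Kpoly (p : ℕ) (c : ℤ) (a b : ℕ) : Polynomial ℤ :=
  ∑ i ∈ Finset.range (a + 1),
    ((p : Polynomial ℤ) ^ 2 * X) ^ i *
      ((∑ j ∈ Finset.range (b + 1 - i), ((p : Polynomial ℤ) ^ 3 * X ^ 2) ^ j) -
        C c * (p : Polynomial ℤ) * X *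
          ∑ j ∈ Finset.range (b - i), ((p : Polynomial ℤ) ^ 3 * X ^ 2) ^ j)

lemma Kpoly_step (p : ℕ) (c : ℤ) (a b : ℕ) :
    Kpoly p c (a + 1) (b + 1) =
      ((∑ j ∈ Finset.range (b + 2), ((p : Polynomial ℤ) ^ 3 * X ^ 2) ^ j) -
        C c * (p : Polynomial ℤ) * X *
          ∑ j ∈ Finset.range (b + 1), ((p : Polynomial ℤ) ^ 3 * X ^ 2) ^ j) +
      ((p : Polynomial ℤ) ^ 2 * X) * Kpoly p c a b := by
  unfold Kpoly
  rw [Finset.sum_range_succ']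
  simp only [Nat.succ_sub_succ, Nat.sub_zero, pow_zero, one_mul, pow_succ, Finset.mul_sum]
  rw [add_comm]
  refine congrArg₂ (· + ·) rfl ?_
  · apply Finset.sum_congr rfl
    intro i _
    ring

theorem stmt_7 (p : ℕ) (hp : p.Prime) (c : ℤ) (a b : ℕ) :
    Kpoly p c (a + 2) (b + 2) -
        ((p : Polynomial ℤ) ^ 2 * X + (p : Polynomial ℤ) ^ 3 * X ^ 2) *
          Kpoly p c (a + 1) (b + 1) +
        (p : Polynomial ℤ) ^ 5 * X ^ 3 * Kpoly p c a b =
      1 - C c * (p : Polynomial ℤ) * X := by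
  have h1 := Kpoly_step p c (a + 1) (b + 1)
  have h2 := Kpoly_step p c a b
  have g1 : (∑ j ∈ Finset.range (b + 3), ((p : Polynomial ℤ) ^ 3 * X ^ 2) ^ j) =
      ((p : Polynomial ℤ) ^ 3 * X ^ 2) *
        (∑ j ∈ Finset.range (b + 2), ((p : Polynomial ℤ) ^ 3 * X ^ 2) ^ j) + 1 :=
    geom_sum_succ
  have g2 : (∑ j ∈ Finset.range (b + 2), ((p : Polynomial ℤ) ^ 3 * X ^ 2) ^ j) =
      ((p : Polynomial ℤ) ^ 3 * X ^ 2) *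
        (∑ j ∈ Finset.range (b + 1), ((p : Polynomial ℤ) ^ 3 * X ^ 2) ^ j) + 1 :=
    geom_sum_succ
  rw [h1, h2, g1, g2]
  ring
end

section
/- Let p be a prime, n ≥ 2 an even integer, and κ an integer with κ > n+1. Define rational numbers ψ₀ := p^{(n/2)(κ−n/2) − (n/2)((n/2)+1)/2}, ψ_i := p^{−κ+n/2+i} for 1 ≤ i ≤ n/2, and ψ_i := p^{κ−n+i−1} for n/2+1 ≤ i ≤ n, and define the polynomial Q(Y) := (1 − ψ₀·Y) · ∏_{S}(1 − ψ₀·(∏_{i∈S} ψ_i)·Y) ∈ ℚ[Y], where the product runs over all nonempty subsets S of {1,…,n}. Then the polynomial (1 − ψ₀·Y)·(1 − Y)·∏_{j=1}^{n}(1 − p^{jκ−j(j+1)/2}·Y) divides Q(Y) in ℚ[Y]. -/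
open Polynomial Finset

lemma prod_zpow_eq (x : ℚ) (hx : x ≠ 0) (s : Finset ℕ) (e : ℕ → ℤ) :
    ∏ i ∈ s, x ^ e i = x ^ (∑ i ∈ s, e i) := by
  classical
  induction s using Finset.induction_on with
  | empty => simp
  | insert _ _ h ih => rw [Finset.prod_insert h, Finset.sum_insert h, zpow_add₀ hx, ih]

lemma sum_Ioc_lin (c : ℤ) (a b : ℕ) (h : a ≤ b) :
    (∑ i ∈ Finset.Ioc a b, ((i : ℤ) + c)) * 2 = ((a:ℤ) + b + 1 + 2*c) * ((b:ℤ) - a) := by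
  induction b, h using Nat.le_induction with
  | base => simp
  | succ b hb ih =>
      rw [Finset.sum_Ioc_succ_top (by omega)]
      push_cast
      push_cast at ih
      linear_combination ih


/-- The Satake parameters `ψ₀, ψ₁, …, ψ_n` at `p` of the Siegel Eisenstein series of even
genus `n` and weight `κ`:  `ψ₀ = p^{(n/2)(κ−n/2) − (n/2)((n/2)+1)/2}`,
`ψ_i = p^{−κ+n/2+i}` for `1 ≤ i ≤ n/2` and `ψ_i = p^{κ−n+i−1}` for `n/2+1 ≤ i ≤ n`. -/
noncomputable def satake (p n κ : ℕ) : ℕ → ℚ := fun i =>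
  if i = 0 then
    (p : ℚ) ^ (((n / 2 : ℕ) : ℤ) * ((κ : ℤ) - ((n / 2 : ℕ) : ℤ)) -
      ((n / 2 : ℕ) : ℤ) * (((n / 2 : ℕ) : ℤ) + 1) / 2)
  else if i ≤ n / 2 then
    (p : ℚ) ^ ((i : ℤ) + ((n / 2 : ℕ) : ℤ) - (κ : ℤ))
  else
    (p : ℚ) ^ ((κ : ℤ) - (n : ℤ) + (i : ℤ) - 1)

/-- The Hecke polynomial `Q(Y) = (1 − ψ₀Y)·∏_{∅ ≠ S ⊆ {1,…,n}}(1 − ψ₀(∏_{i∈S}ψ_i)Y)` of the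
Siegel Eisenstein series at `p`. -/
noncomputable def heckeQ (p n κ : ℕ) : Polynomial ℚ :=
  (1 - C (satake p n κ 0) * X) *
    ∏ S ∈ (Finset.Icc 1 n).powerset.filter Finset.Nonempty,
      (1 - C (satake p n κ 0 * ∏ i ∈ S, satake p n κ i) * X)

theorem stmt_13 (p : ℕ) (hp : p.Prime) (n : ℕ) (hn : 2 ≤ n) (hneven : Even n)
    (κ : ℕ) (hκ : n + 1 < κ) :
    ((1 - C (satake p n κ 0) * X) * (1 - X) *
        ∏ j ∈ Finset.Icc 1 n, (1 - C ((p : ℚ) ^ (j * κ - j * (j + 1) / 2)) * X)) ∣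
      heckeQ p n κ := by
  classical
  obtain ⟨m, hm⟩ := hneven
  subst hm
  have hm1 : 1 ≤ m := by omega
  have hn2 : (m+m) / 2 = m := by omega
  have hp0 : (p : ℚ) ≠ 0 := by exact_mod_cast hp.ne_zero
  -- exponent function
  set e : ℕ → ℤ := fun i => if i ≤ m then (i:ℤ) + m - κ else (κ:ℤ) - (m+m) + i - 1 with he
  have hsat : ∀ i ∈ Finset.Ioc 0 (m+m), satake p (m+m) κ i = (p:ℚ) ^ e i := by
    intro i hi
    simp only [Finset.mem_Ioc] at hi
    simp only [satake, he, hn2]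
    rw [if_neg (by omega)]
    by_cases h : i ≤ m
    · rw [if_pos h, if_pos h]
    · rw [if_neg h, if_neg h]
      congr 1
  -- ψ₀
  obtain ⟨a, ha⟩ : ∃ a, m * (m+1) = 2 * a := (Nat.even_mul_succ_self m).exists_two_nsmul _
  have ha' : (m:ℤ) * ((m:ℤ) + 1) = 2 * (a:ℤ) := by exact_mod_cast ha
  have hψ0 : satake p (m+m) κ 0 = (p:ℚ) ^ ((m:ℤ) * κ - (m:ℤ) * m - (a:ℤ)) := by
    have hr : satake p (m+m) κ 0 = (p : ℚ) ^ ((((m+m) / 2 : ℕ) : ℤ) * ((κ : ℤ) - (((m+m) / 2 : ℕ) : ℤ)) -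
        (((m+m) / 2 : ℕ) : ℤ) * ((((m+m) / 2 : ℕ) : ℤ) + 1) / 2) := rfl
    rw [hr, hn2]
    congr 1
    rw [ha', Int.mul_ediv_cancel_left _ two_ne_zero]
    ring
  -- the chosen subsets
  set g : ℕ → Finset ℕ := fun j => if j ≤ m then Finset.Ioc 0 m ∪ Finset.Ioc ((m+m) - j) (m+m)
      else Finset.Ioc (j - m) (m+m) with hg
  have hdisj : ∀ j, j ≤ m → Disjoint (Finset.Ioc 0 m) (Finset.Ioc ((m+m) - j) (m+m)) := by
    intro j hj
    rw [Finset.disjoint_left]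
    intro i hi hi'
    simp only [Finset.mem_Ioc] at hi hi'
    omega
  have hsub : ∀ j ≤ (m+m), g j ⊆ Finset.Ioc 0 (m+m) := by
    intro j hj i hi
    simp only [hg] at hi
    split_ifs at hi with h
    · rcases Finset.mem_union.1 hi with h' | h' <;> simp only [Finset.mem_Ioc] at h' ⊢ <;> omega
    · simp only [Finset.mem_Ioc] at hi ⊢; omega
  -- key computation
  have hkey : ∀ j ≤ (m+m), satake p (m+m) κ 0 * ∏ i ∈ g j, satake p (m+m) κ i
      = (p:ℚ) ^ (((j * κ - j * (j+1) / 2 : ℕ) : ℤ)) := by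
    intro j hj
    obtain ⟨b, hb⟩ : ∃ b, j * (j+1) = 2 * b := (Nat.even_mul_succ_self j).exists_two_nsmul _
    have hb' : (j:ℤ) * ((j:ℤ) + 1) = 2 * (b:ℤ) := by exact_mod_cast hb
    have hb2 : j * (j+1) / 2 = b := by omega
    have hle : b ≤ j * κ :=
      le_trans (show b ≤ j * (j+1) by omega) (Nat.mul_le_mul le_rfl (by omega))
    have hz : ((j * κ - j * (j+1) / 2 : ℕ) : ℤ) = (j:ℤ) * κ - b := by
      rw [hb2, Nat.cast_sub hle]; push_cast; ring
    rw [hz]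
    have hprod : ∏ i ∈ g j, satake p (m+m) κ i = (p:ℚ) ^ (∑ i ∈ g j, e i) := by
      rw [Finset.prod_congr rfl (fun i hi => hsat i (hsub j hj hi))]
      exact prod_zpow_eq _ hp0 _ _
    rw [hprod, hψ0, ← zpow_add₀ hp0]
    congr 1
    by_cases hjm : j ≤ m
    · have hgj : g j = Finset.Ioc 0 m ∪ Finset.Ioc ((m+m) - j) (m+m) := by simp [hg, hjm]
      rw [hgj, Finset.sum_union (hdisj j hjm)]
      have h1 : ∑ i ∈ Finset.Ioc 0 m, e i = ∑ i ∈ Finset.Ioc 0 m, ((i:ℤ) + ((m:ℤ) - κ)) := by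
        refine Finset.sum_congr rfl fun i hi => ?_
        simp only [Finset.mem_Ioc] at hi
        simp only [he, if_pos hi.2]
        ring
      have h2 : ∑ i ∈ Finset.Ioc ((m+m) - j) (m+m), e i
          = ∑ i ∈ Finset.Ioc ((m+m) - j) (m+m), ((i:ℤ) + ((κ:ℤ) - (m+m) - 1)) := by
        refine Finset.sum_congr rfl fun i hi => ?_
        simp only [Finset.mem_Ioc] at hi
        simp only [he, if_neg (by omega : ¬ i ≤ m)]
        ring
      have s1 := sum_Ioc_lin ((m:ℤ) - κ) 0 m (by omega)
      have s2 := sum_Ioc_lin ((κ:ℤ) - (m+m) - 1) ((m+m) - j) (m+m) (by omega)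
      have hc : (((m+m) - j : ℕ) : ℤ) = ((m+m):ℤ) - j := by omega
      rw [hc] at s2
      rw [h1, h2]
      refine mul_right_cancel₀ (b := (2:ℤ)) two_ne_zero ?_
      push_cast at s1 s2 ⊢
      linear_combination s1 + s2 + ha' - hb'
    · have hgj : g j = Finset.Ioc (j - m) (m+m) := by simp [hg, hjm]
      have hsplit : Finset.Ioc (j - m) (m+m) = Finset.Ioc (j - m) m ∪ Finset.Ioc m (m+m) :=
        (Finset.Ioc_union_Ioc_eq_Ioc (by omega) (by omega)).symm
      have hd2 : Disjoint (Finset.Ioc (j - m) m) (Finset.Ioc m (m+m)) := by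
        rw [Finset.disjoint_left]
        intro i hi hi'
        simp only [Finset.mem_Ioc] at hi hi'
        omega
      rw [hgj, hsplit, Finset.sum_union hd2]
      have h1 : ∑ i ∈ Finset.Ioc (j - m) m, e i
          = ∑ i ∈ Finset.Ioc (j - m) m, ((i:ℤ) + ((m:ℤ) - κ)) := by
        refine Finset.sum_congr rfl fun i hi => ?_
        simp only [Finset.mem_Ioc] at hi
        simp only [he, if_pos hi.2]
        ring
      have h2 : ∑ i ∈ Finset.Ioc m (m+m), e i
          = ∑ i ∈ Finset.Ioc m (m+m), ((i:ℤ) + ((κ:ℤ) - (m+m) - 1)) := by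
        refine Finset.sum_congr rfl fun i hi => ?_
        simp only [Finset.mem_Ioc] at hi
        simp only [he, if_neg (by omega : ¬ i ≤ m)]
        ring
      have s1 := sum_Ioc_lin ((m:ℤ) - κ) (j - m) m (by omega)
      have s2 := sum_Ioc_lin ((κ:ℤ) - (m+m) - 1) m (m+m) (by omega)
      have hc : ((j - m : ℕ) : ℤ) = (j:ℤ) - m := by omega
      rw [hc] at s1
      rw [h1, h2]
      refine mul_right_cancel₀ (b := (2:ℤ)) two_ne_zero ?_
      push_cast at s1 s2 ⊢
      linear_combination s1 + s2 + ha' - hb'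
  -- membership
  have hIcc : Finset.Icc 1 (m+m) = Finset.Ioc 0 (m+m) := by
    ext x; simp only [Finset.mem_Icc, Finset.mem_Ioc]; omega
  have hmem : ∀ j ≤ (m+m), g j ∈ (Finset.Icc 1 (m+m)).powerset.filter Finset.Nonempty := by
    intro j hj
    rw [Finset.mem_filter, Finset.mem_powerset, hIcc]
    refine ⟨hsub j hj, ?_⟩
    by_cases hjm : j ≤ m
    · refine ⟨1, ?_⟩
      simp only [hg, if_pos hjm, Finset.mem_union, Finset.mem_Ioc]
      left; omega
    · refine ⟨(m+m), ?_⟩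
      simp only [hg, if_neg hjm, Finset.mem_Ioc]
      omega
  -- injectivity
  have hone : ∀ j ≤ (m+m), (1 ∈ g j ↔ j ≤ m) := by
    intro j hj
    by_cases hjm : j ≤ m
    · simp only [hg, if_pos hjm, Finset.mem_union, Finset.mem_Ioc]
      constructor
      · intro; exact hjm
      · intro; left; omega
    · simp only [hg, if_neg hjm, Finset.mem_Ioc]
      constructor
      · intro h; omega
      · intro h; exact absurd h hjm
  have hcard : ∀ j ≤ (m+m), (g j).card = if j ≤ m then m + j else (m+m) + m - j := by
    intro j hj
    by_cases hjm : j ≤ m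
    · simp only [hg, if_pos hjm]
      rw [Finset.card_union_of_disjoint (hdisj j hjm), Nat.card_Ioc, Nat.card_Ioc]
      omega
    · simp only [hg, if_neg hjm]
      rw [Nat.card_Ioc]
      omega
  have hinj : Set.InjOn g (Finset.Icc 0 (m+m)) := by
    intro j₁ h₁ j₂ h₂ hgeq
    simp only [Finset.coe_Icc, Set.mem_Icc] at h₁ h₂
    have e1 := hone j₁ h₁.2
    have e2 := hone j₂ h₂.2
    have c1 := hcard j₁ h₁.2
    have c2 := hcard j₂ h₂.2
    rw [hgeq] at e1 c1
    by_cases hj1 : j₁ ≤ m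
    · have hj2 := e2.mp (e1.mpr hj1)
      rw [if_pos hj1] at c1; rw [if_pos hj2] at c2; omega
    · have hj2 : ¬ j₂ ≤ m := fun h => hj1 (e1.mp (e2.mpr h))
      rw [if_neg hj1] at c1; rw [if_neg hj2] at c2; omega
  -- assembly
  rw [heckeQ, mul_assoc]
  apply mul_dvd_mul_left
  have himg : (1 - X) * ∏ j ∈ Finset.Icc 1 (m+m), (1 - C ((p : ℚ) ^ (j * κ - j * (j + 1) / 2)) * X)
      = ∏ S ∈ (Finset.Icc 0 (m+m)).image g,
          (1 - C (satake p (m+m) κ 0 * ∏ i ∈ S, satake p (m+m) κ i) * X) := by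
    rw [Finset.prod_image (fun x hx y hy h => hinj (by simpa using hx) (by simpa using hy) h)]
    have h0n : Finset.Icc 0 (m+m) = insert 0 (Finset.Icc 1 (m+m)) := by
      ext x; simp only [Finset.mem_Icc, Finset.mem_insert]; omega
    rw [h0n, Finset.prod_insert (by simp [Finset.mem_Icc])]
    congr 1
    · rw [hkey 0 (by omega)]
      norm_num
    · refine Finset.prod_congr rfl fun j hj => ?_
      simp only [Finset.mem_Icc] at hj
      rw [hkey j hj.2, zpow_natCast]
  rw [himg]
  apply Finset.prod_dvd_prod_of_subset
  intro S hS
  simp only [Finset.mem_image] at hS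
  obtain ⟨j, hj, rfl⟩ := hS
  exact hmem j (by simp only [Finset.mem_Icc] at hj; exact hj.2)
end
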